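/- Opposite Longitudinal Safety (Theorem 2): Let x1_k, v1_k, x2_k, v2_k (k = 0,…,n) be finite sequences of reals such that for every k < n there exist accelerations a1_k, a2_k and a duration t_k with 0 ≤ t_k ≤ ρ satisfying: either (free driving) safeDist_o(v1_k, v2_k) ≤ x2_k − x1_k and −a_maxBrake ≤ a1_k ≤ a_maxAccel and −a_maxAccel ≤ a2_k ≤ a_maxBrake, or (proper response) safeDist_o(v1_k, v2_k) ≥ x2_k − x1_k and (a1_k ≤ −a_minBrake or (v1_k = 0 and a1_k = 0)) and (a2_k ≥ a_minBrake or (v2_k = 0 and a2_k = 0)); moreover v1_k + a1_k·s ≥ 0 and v2_k + a2_k·s ≤ 0 for all s ∈ [0, t_k], and (x1_{k+1}, v1_{k+1}, x2_{k+1}, v2_{k+1}) is the kinematic update of (x1_k, v1_k, x2_k, v2_k) over duration t_k with accelerations a1_k, a2_k. If x1_0 ≤ x2_0 and safeDist_o(v1_0, v2_0) ≤ x2_0 − x1_0, then x1_k ≤ x2_k for all k = 0,…,n. -/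

import Mathlib

set_option maxHeartbeats 4000000


/-- RSS opposite-direction safe distance. -/
noncomputable def safeDistO (aminBrake amaxAccel ρ v1 v2 : ℝ) : ℝ :=
  ((v1 + (v1 + ρ * amaxAccel)) / 2) * ρ + (v1 + ρ * amaxAccel)^2 / (2 * aminBrake)
  + ((|v2| + (|v2| + ρ * amaxAccel)) / 2) * ρ + (|v2| + ρ * amaxAccel)^2 / (2 * aminBrake)

/-- Opposite Longitudinal Safety (Theorem 2). -/
theorem opposite_longitudinal_safety
    (aminBrake amaxBrake amaxAccel ρ : ℝ)
    (hmin : 0 < aminBrake) (hminmax : aminBrake < amaxBrake)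
    (hacc : 0 < amaxAccel) (hρ : 0 < ρ)
    (n : ℕ) (x1 v1 x2 v2 : ℕ → ℝ)
    (hstep : ∀ k < n, ∃ a1 a2 t : ℝ, 0 ≤ t ∧ t ≤ ρ ∧
      ((safeDistO aminBrake amaxAccel ρ (v1 k) (v2 k) ≤ x2 k - x1 k ∧
        -amaxBrake ≤ a1 ∧ a1 ≤ amaxAccel ∧ -amaxAccel ≤ a2 ∧ a2 ≤ amaxBrake) ∨
       (safeDistO aminBrake amaxAccel ρ (v1 k) (v2 k) ≥ x2 k - x1 k ∧
        (a1 ≤ -aminBrake ∨ (v1 k = 0 ∧ a1 = 0)) ∧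
        (a2 ≥ aminBrake ∨ (v2 k = 0 ∧ a2 = 0)))) ∧
      (∀ s : ℝ, 0 ≤ s → s ≤ t → v1 k + a1 * s ≥ 0 ∧ v2 k + a2 * s ≤ 0) ∧
      x1 (k+1) = x1 k + v1 k * t + (1/2) * a1 * t^2 ∧
      v1 (k+1) = v1 k + a1 * t ∧
      x2 (k+1) = x2 k + v2 k * t + (1/2) * a2 * t^2 ∧
      v2 (k+1) = v2 k + a2 * t)
    (hinit1 : x1 0 ≤ x2 0)
    (hinit2 : safeDistO aminBrake amaxAccel ρ (v1 0) (v2 0) ≤ x2 0 - x1 0) :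
    ∀ k ≤ n, x1 k ≤ x2 k := by
  rcases Nat.eq_zero_or_pos n with hn | hn
  · intro k hk
    have : k = 0 := by omega
    simpa [this] using hinit1
  have h2b : (0:ℝ) < 2 * aminBrake := by linarith
  -- sign facts for velocities at every step index
  have hsign : ∀ k < n, 0 ≤ v1 k ∧ v2 k ≤ 0 := by
    intro k hk
    obtain ⟨a1, a2, t, ht0, htρ, _, hs, _⟩ := hstep k hk
    have h := hs 0 le_rfl ht0
    constructor <;> nlinarith [h.1, h.2]
  -- key invariant
  have key : ∀ k ≤ n, (v1 k)^2 + (v2 k)^2 ≤ 2 * aminBrake * (x2 k - x1 k) := by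
    intro k hk
    induction k with
    | zero =>
      have h0 := hsign 0 hn
      have hs2b := mul_le_mul_of_nonneg_left hinit2 h2b.le
      unfold safeDistO at hs2b
      clear hstep hinit1 hinit2 hk
      have habs1 : (v1 0)^2 ≤ (v1 0 + ρ * amaxAccel)^2 := by
        nlinarith [h0.1, mul_pos hρ hacc]
      have habs2 : (v2 0)^2 ≤ (|v2 0| + ρ * amaxAccel)^2 := by
        nlinarith [abs_nonneg (v2 0), sq_abs (v2 0), mul_pos hρ hacc]
      have hl1 : 0 ≤ ((v1 0 + (v1 0 + ρ * amaxAccel)) / 2) * ρ := by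
        nlinarith [h0.1, mul_pos hρ hacc]
      have hl2 : 0 ≤ ((|v2 0| + (|v2 0| + ρ * amaxAccel)) / 2) * ρ := by
        nlinarith [abs_nonneg (v2 0), mul_pos hρ hacc]
      have hdiv1 : 2 * aminBrake * ((v1 0 + ρ * amaxAccel)^2 / (2 * aminBrake))
          = (v1 0 + ρ * amaxAccel)^2 := by field_simp
      have hdiv2 : 2 * aminBrake * ((|v2 0| + ρ * amaxAccel)^2 / (2 * aminBrake))
          = (|v2 0| + ρ * amaxAccel)^2 := by field_simp
      nlinarith [hs2b, habs1, habs2, mul_le_mul_of_nonneg_left hl1 h2b.le,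
        mul_le_mul_of_nonneg_left hl2 h2b.le]
    | succ k ih =>
      have hkn : k < n := by omega
      have ihk := ih (le_of_lt hkn)
      obtain ⟨a1, a2, t, ht0, htρ, hcase, hs, hx1, hv1e, hx2, hv2e⟩ := hstep k hkn
      have hv10 : 0 ≤ v1 k := (hsign k hkn).1
      have hv20 : v2 k ≤ 0 := (hsign k hkn).2
      have hvt := hs t ht0 le_rfl
      have hvt1 : 0 ≤ v1 k + a1 * t := hvt.1
      have hvt2 : v2 k + a2 * t ≤ 0 := hvt.2
      clear hstep hs hsign hvt ih hinit1 hinit2 hk hkn hn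
      rw [hx1, hx2, hv1e, hv2e]
      rcases hcase with ⟨hsafe, ha1l, ha1u, ha2l, ha2u⟩ | ⟨hsafe, ha1, ha2⟩
      · -- free driving
        unfold safeDistO at hsafe
        rw [show |v2 k| = -v2 k from abs_of_nonpos hv20] at hsafe
        have ht2 : t^2 ≤ ρ^2 := pow_le_pow_left₀ ht0 htρ 2
        have ha1t : a1 * t ≤ amaxAccel * ρ := by
          nlinarith [mul_le_mul_of_nonneg_right ha1u ht0, mul_le_mul_of_nonneg_left htρ hacc.le]
        have ha2t : -(a2 * t) ≤ amaxAccel * ρ := by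
          nlinarith [mul_le_mul_of_nonneg_right (show -a2 ≤ amaxAccel by linarith) ht0,
            mul_le_mul_of_nonneg_left htρ hacc.le]
        have h1 : (v1 k + a1 * t)^2 ≤ (v1 k + ρ * amaxAccel)^2 := by
          have := pow_le_pow_left₀ hvt1 (show v1 k + a1 * t ≤ v1 k + ρ * amaxAccel by
            nlinarith [ha1t]) 2
          nlinarith [this]
        have h2 : (v2 k + a2 * t)^2 ≤ (-v2 k + ρ * amaxAccel)^2 := by
          have := pow_le_pow_left₀ (show (0:ℝ) ≤ -(v2 k + a2 * t) by linarith)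
            (show -(v2 k + a2 * t) ≤ -v2 k + ρ * amaxAccel by nlinarith [ha2t]) 2
          nlinarith [this]
        have h3 : v1 k * t + (1/2) * a1 * t^2 ≤ ((v1 k + (v1 k + ρ * amaxAccel)) / 2) * ρ := by
          nlinarith [mul_le_mul_of_nonneg_left htρ hv10,
            mul_le_mul_of_nonneg_right ha1u (sq_nonneg t),
            mul_le_mul_of_nonneg_left ht2 hacc.le]
        have h4 : -(v2 k * t + (1/2) * a2 * t^2) ≤ ((-v2 k + (-v2 k + ρ * amaxAccel)) / 2) * ρ := by
          nlinarith [mul_le_mul_of_nonneg_left htρ (show (0:ℝ) ≤ -v2 k by linarith),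
            mul_le_mul_of_nonneg_right (show -a2 ≤ amaxAccel by linarith) (sq_nonneg t),
            mul_le_mul_of_nonneg_left ht2 hacc.le]
        have hsafe2 : 2 * aminBrake * (((v1 k + (v1 k + ρ * amaxAccel)) / 2) * ρ)
            + (v1 k + ρ * amaxAccel)^2
            + 2 * aminBrake * (((-v2 k + (-v2 k + ρ * amaxAccel)) / 2) * ρ)
            + (-v2 k + ρ * amaxAccel)^2 ≤ 2 * aminBrake * (x2 k - x1 k) := by
          have h := mul_le_mul_of_nonneg_left hsafe h2b.le
          have e : 2 * aminBrake * ((v1 k + (v1 k + ρ * amaxAccel)) / 2 * ρ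
              + (v1 k + ρ * amaxAccel) ^ 2 / (2 * aminBrake)
              + (-v2 k + (-v2 k + ρ * amaxAccel)) / 2 * ρ
              + (-v2 k + ρ * amaxAccel) ^ 2 / (2 * aminBrake))
              = 2 * aminBrake * (((v1 k + (v1 k + ρ * amaxAccel)) / 2) * ρ)
              + (v1 k + ρ * amaxAccel)^2
              + 2 * aminBrake * (((-v2 k + (-v2 k + ρ * amaxAccel)) / 2) * ρ)
              + (-v2 k + ρ * amaxAccel)^2 := by
            field_simp
          linarith [e.ge.trans h]
        nlinarith [hsafe2, h1, h2,
          mul_le_mul_of_nonneg_left h3 h2b.le, mul_le_mul_of_nonneg_left h4 h2b.le]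
      · -- proper response
        have c1 : (v1 k + a1 * t)^2 + 2 * aminBrake * (v1 k * t + (1/2) * a1 * t^2)
            ≤ (v1 k)^2 := by
          rcases ha1 with ha1 | ⟨hv0, ha0⟩
          · nlinarith [mul_nonneg (mul_nonneg ht0 (show 0 ≤ 2 * v1 k + a1 * t by
              linarith)) (show 0 ≤ -(a1 + aminBrake) by linarith)]
          · rw [hv0, ha0]; ring_nf; norm_num
        have c2 : (v2 k + a2 * t)^2
            ≤ (v2 k)^2 + 2 * aminBrake * (v2 k * t + (1/2) * a2 * t^2) := by
          rcases ha2 with ha2 | ⟨hv0, ha0⟩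
          · nlinarith [mul_nonneg (mul_nonneg ht0 (show 0 ≤ -(2 * v2 k + a2 * t) by
              linarith)) (show 0 ≤ a2 - aminBrake by linarith)]
          · rw [hv0, ha0]; ring_nf; norm_num
        nlinarith [ihk, c1, c2]
  intro k hk
  nlinarith [key k hk, sq_nonneg (v1 k), sq_nonneg (v2 k)]
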